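/- arXiv:1904.03118 — 2 statements merged into one kernel-verified Lean document; each statement's English description precedes it below -/
import Mathlib

section
/- Let V be a real separable Hilbert space with orthonormal basis (e_k)_{k≥1}, let (λ_k)_{k≥1} be a nondecreasing sequence of strictly positive real numbers with λ_k → ∞ and ∑_{k=1}^∞ 1/λ_k < ∞, and let μ be a σ-finite Borel measure on V with K₁ := sup_{‖v‖≤1} ∫_V ( ⟨u,v⟩² ∧ 1 ) μ(du) < ∞. Then the following two pairs of conditions are equivalent: [(c) sup_{n≥1} ∫₀^∞ ∫_V ( ( ∑_{k=1}^n e^{−2λ_k s} ⟨u,e_k⟩² ) ∧ 1 ) μ(du) ds < ∞ and (d) lim_{m→∞} sup_{n≥m} ∫₀^∞ ∫_V ( ( ∑_{k=m}^n e^{−2λ_k s} ⟨u,e_k⟩² ) ∧ 1 ) μ(du) ds = 0] if and only if [(i) sup_{n≥1} ∫_V max_{1≤k≤n} ( log⁺|⟨u,e_k⟩| / λ_k ) μ(du) < ∞ and (ii) lim_{m→∞} sup_{n≥m} ∫_V max_{m≤k≤n} ( log⁺|⟨u,e_k⟩| / λ_k ) μ(du) = 0]. -/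
open MeasureTheory Filter Topology
open scoped RealInnerProductSpace ENNReal NNReal

lemma lint_exp {b : ℝ} (hb : 0 < b) (t : ℝ) :
    ∫⁻ s in Set.Ioi t, ENNReal.ofReal (Real.exp (-b * s)) =
      ENNReal.ofReal (Real.exp (-b * t) / b) := by
  have hi : IntegrableOn (fun x : ℝ => Real.exp (-b * x)) (Set.Ioi t) :=
    exp_neg_integrableOn_Ioi t hb
  rw [← ofReal_integral_eq_lintegral_ofReal hi
    (Filter.Eventually.of_forall fun x => (Real.exp_pos _).le)]
  congr 1
  have hderiv : ∀ x ∈ Set.Ioi t,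
      HasDerivAt (fun x => -Real.exp (-b * x) / b) (Real.exp (-b * x)) x := by
    intro x _
    have h := (((hasDerivAt_id x).const_mul (-b)).exp.neg.div_const b)
    refine h.congr_deriv ?_
    field_simp
    rfl
  have htend : Tendsto (fun x => -Real.exp (-b * x) / b) atTop (𝓝 (-0 / b)) := by
    refine Tendsto.div_const (Tendsto.neg ?_) _
    exact Real.tendsto_exp_atBot.comp (tendsto_id.const_mul_atTop_of_neg (neg_neg_iff_pos.2 hb))
  have hcont : ContinuousWithinAt (fun x => -Real.exp (-b * x) / b) (Set.Ici t) t :=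
    (((Real.continuous_exp.comp (continuous_const.mul continuous_id)).neg).div_const
      b).continuousWithinAt
  have := integral_Ioi_of_hasDerivAt_of_tendsto hcont hderiv hi htend
  rw [this]
  ring

lemma sum_Icc_le_tail (f : ℕ → ℝ≥0∞) (m n : ℕ) :
    ∑ k ∈ Finset.Icc m n, f k ≤ ∑' j, f (j + m) := by
  rcases le_or_gt m n with h | h
  · have hmap : Finset.Icc m n = (Finset.Icc 0 (n - m)).map (addLeftEmbedding m) := by
      rw [Finset.map_add_left_Icc]
      congr 1
      omega
    rw [hmap, Finset.sum_map]
    calc ∑ j ∈ Finset.Icc 0 (n - m), f (addLeftEmbedding m j)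
        = ∑ j ∈ Finset.Icc 0 (n - m), f (j + m) := by
          refine Finset.sum_congr rfl fun j _ => ?_
          simp [addLeftEmbedding, add_comm]
      _ ≤ ∑' j, f (j + m) := ENNReal.sum_le_tsum _
  · simp [Finset.Icc_eq_empty_of_lt h]

lemma measurable_finset_sup {α : Type*} [MeasurableSpace α] (s : Finset ℕ)
    (f : ℕ → α → ℝ≥0∞) (hf : ∀ k, Measurable (f k)) :
    Measurable fun u => s.sup fun k => f k u := by
  classical
  induction s using Finset.induction_on with
  | empty => simpa using measurable_const
  | insert _ _ ha ih =>
      simp only [Finset.sup_insert]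
      exact Measurable.sup (hf _) ih

lemma coe_finset_sup (s : Finset ℕ) (f : ℕ → ℝ≥0) :
    ((s.sup f : ℝ≥0) : ℝ≥0∞) = s.sup fun k => ((f k : ℝ≥0∞)) :=
  Finset.comp_sup_eq_sup_comp (fun r : ℝ≥0 => (r : ℝ≥0∞)) (fun _ _ => rfl) rfl

lemma lemA (lam : ℕ → ℝ) (hpos : ∀ k, 0 < lam k) (x : ℕ → ℝ) {m n k : ℕ}
    (hk : k ∈ Finset.Icc m n) :
    ENNReal.ofReal (Real.log (max |x k| 1) / lam k) ≤
      ∫⁻ s in Set.Ioi (0:ℝ), ENNReal.ofReal (min (∑ j ∈ Finset.Icc m n,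
        Real.exp (-(2 * lam j * s)) * x j ^ 2) 1) := by
  set t := Real.log (max |x k| 1) / lam k with ht
  have ht0 : 0 ≤ t := div_nonneg (Real.log_nonneg (le_max_right _ _)) (hpos k).le
  have key : ∀ s ∈ Set.Ioc (0:ℝ) t,
      (1:ℝ≥0∞) ≤ ENNReal.ofReal (min (∑ j ∈ Finset.Icc m n,
        Real.exp (-(2 * lam j * s)) * x j ^ 2) 1) := by
    intro s hs
    have hs0 : 0 < s := hs.1
    have hls : lam k * s ≤ Real.log (max |x k| 1) := by
      have h1 : lam k * s ≤ lam k * t :=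
        mul_le_mul_of_nonneg_left hs.2 (hpos k).le
      have h2 : lam k * t = Real.log (max |x k| 1) := by
        rw [ht, mul_div_cancel₀ _ (hpos k).ne']
      linarith
    have hexp : Real.exp (lam k * s) ≤ max |x k| 1 :=
      (Real.le_log_iff_exp_le (lt_of_lt_of_le one_pos (le_max_right _ _))).mp hls
    have hone : 1 < Real.exp (lam k * s) :=
      Real.one_lt_exp_iff.mpr (mul_pos (hpos k) hs0)
    have habs : Real.exp (lam k * s) ≤ |x k| := by
      rcases max_cases |x k| 1 with ⟨hm, _⟩ | ⟨hm, _⟩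
      · rwa [hm] at hexp
      · rw [hm] at hexp; linarith
    have hsq : Real.exp (2 * lam k * s) ≤ x k ^ 2 := by
      have h3 := mul_le_mul habs habs (Real.exp_pos _).le (abs_nonneg _)
      calc Real.exp (2 * lam k * s)
          = Real.exp (lam k * s) * Real.exp (lam k * s) := by
            rw [← Real.exp_add]; ring_nf
        _ ≤ |x k| * |x k| := h3
        _ = x k ^ 2 := by rw [abs_mul_abs_self, sq]
    have hterm : (1:ℝ) ≤ Real.exp (-(2 * lam k * s)) * x k ^ 2 := by
      have h4 : Real.exp (-(2 * lam k * s)) * Real.exp (2 * lam k * s) = 1 := by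
        rw [← Real.exp_add]; simp
      calc (1:ℝ) = Real.exp (-(2 * lam k * s)) * Real.exp (2 * lam k * s) := h4.symm
        _ ≤ Real.exp (-(2 * lam k * s)) * x k ^ 2 :=
            mul_le_mul_of_nonneg_left hsq (Real.exp_pos _).le
    have hsum : (1:ℝ) ≤ ∑ j ∈ Finset.Icc m n, Real.exp (-(2 * lam j * s)) * x j ^ 2 :=
      le_trans hterm (Finset.single_le_sum
        (f := fun j => Real.exp (-(2 * lam j * s)) * x j ^ 2) (fun j _ => by positivity) hk)
    have : min (∑ j ∈ Finset.Icc m n, Real.exp (-(2 * lam j * s)) * x j ^ 2) 1 = 1 :=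
      min_eq_right hsum
    rw [this]
    simp
  calc ENNReal.ofReal t
      = ∫⁻ s in Set.Ioi (0:ℝ), (Set.Ioc (0:ℝ) t).indicator (1 : ℝ → ℝ≥0∞) s := by
        rw [lintegral_indicator_one measurableSet_Ioc,
          Measure.restrict_apply measurableSet_Ioc,
          Set.inter_eq_self_of_subset_left Set.Ioc_subset_Ioi_self, Real.volume_Ioc]
        simp
    _ ≤ _ := by
        refine lintegral_mono fun s => ?_
        by_cases hsm : s ∈ Set.Ioc (0:ℝ) t
        · rw [Set.indicator_of_mem hsm]; exact key s hsm
        · rw [Set.indicator_of_notMem hsm]; exact zero_le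

lemma lemB (lam : ℕ → ℝ) (hpos : ∀ k, 0 < lam k) (x : ℕ → ℝ) (m n : ℕ) :
    (∫⁻ s in Set.Ioi (0:ℝ), ENNReal.ofReal (min (∑ j ∈ Finset.Icc m n,
        Real.exp (-(2 * lam j * s)) * x j ^ 2) 1)) ≤
      (((Finset.Icc m n).sup fun k =>
          Real.toNNReal (Real.log (max |x k| 1) / lam k) : ℝ≥0) : ℝ≥0∞)
        + ∑ j ∈ Finset.Icc m n,
            ENNReal.ofReal (1 / (2 * lam j)) * ENNReal.ofReal (min (x j ^ 2) 1) := by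
  set T : ℝ≥0 := (Finset.Icc m n).sup fun k =>
    Real.toNNReal (Real.log (max |x k| 1) / lam k) with hT
  set t : ℝ := (T : ℝ) with htdef
  have ht0 : (0:ℝ) ≤ t := T.coe_nonneg
  have htk : ∀ j ∈ Finset.Icc m n, Real.log (max |x j| 1) / lam j ≤ t := by
    intro j hj
    have h1 : Real.toNNReal (Real.log (max |x j| 1) / lam j) ≤ T :=
      Finset.le_sup (f := fun k => Real.toNNReal (Real.log (max |x k| 1) / lam k)) hj
    calc Real.log (max |x j| 1) / lam j
        ≤ (Real.toNNReal (Real.log (max |x j| 1) / lam j) : ℝ) :=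
          Real.le_coe_toNNReal _
      _ ≤ t := by exact_mod_cast h1
  have hsplit : Set.Ioc (0:ℝ) t ∪ Set.Ioi t = Set.Ioi (0:ℝ) :=
    Set.Ioc_union_Ioi_eq_Ioi ht0
  rw [← hsplit, lintegral_union measurableSet_Ioi Set.Ioc_disjoint_Ioi_same]
  refine add_le_add ?_ ?_
  · calc (∫⁻ s in Set.Ioc (0:ℝ) t, ENNReal.ofReal (min (∑ j ∈ Finset.Icc m n,
            Real.exp (-(2 * lam j * s)) * x j ^ 2) 1))
        ≤ ∫⁻ _ in Set.Ioc (0:ℝ) t, (1:ℝ≥0∞) := by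
          refine lintegral_mono fun s => ?_
          simpa using ENNReal.ofReal_le_one.mpr (min_le_right _ _)
      _ = ENNReal.ofReal t := by
          rw [setLIntegral_const, one_mul, Real.volume_Ioc]
          simp
      _ = (T : ℝ≥0∞) := by rw [htdef, ENNReal.ofReal_coe_nnreal]
  · have hpt : ∀ s ∈ Set.Ioi t, ENNReal.ofReal (min (∑ j ∈ Finset.Icc m n,
        Real.exp (-(2 * lam j * s)) * x j ^ 2) 1) ≤
        ∑ j ∈ Finset.Icc m n,
          ENNReal.ofReal (Real.exp (-(2 * lam j) * (s - t))) *
            ENNReal.ofReal (min (x j ^ 2) 1) := by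
      intro s hs
      have hst : t < s := hs
      have hterm : ∀ j ∈ Finset.Icc m n,
          Real.exp (-(2 * lam j * s)) * x j ^ 2 ≤
            Real.exp (-(2 * lam j) * (s - t)) * min (x j ^ 2) 1 := by
        intro j hj
        rcases le_or_gt (x j ^ 2) 1 with hx | hx
        · rw [min_eq_left hx]
          have : Real.exp (-(2 * lam j * s)) ≤ Real.exp (-(2 * lam j) * (s - t)) := by
            apply Real.exp_le_exp.mpr
            nlinarith [(hpos j)]
          exact mul_le_mul_of_nonneg_right this (sq_nonneg _)
        · rw [min_eq_right hx.le]
          have habs : 1 < |x j| := by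
            nlinarith [abs_nonneg (x j), sq_abs (x j)]
          have hlog : Real.log (max |x j| 1) = Real.log |x j| := by
            rw [max_eq_left habs.le]
          have htj : Real.log |x j| / lam j ≤ t := hlog ▸ htk j hj
          have hxle : x j ^ 2 ≤ Real.exp (2 * lam j * t) := by
            have h1 : Real.log |x j| ≤ lam j * t := by
              rw [div_le_iff₀ (hpos j)] at htj; linarith
            have h2 : |x j| ≤ Real.exp (lam j * t) :=
              (Real.log_le_iff_le_exp (lt_trans one_pos habs)).mp h1
            calc x j ^ 2 = |x j| * |x j| := by rw [abs_mul_abs_self, sq]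
              _ ≤ Real.exp (lam j * t) * Real.exp (lam j * t) :=
                  mul_le_mul h2 h2 (abs_nonneg _) (Real.exp_pos _).le
              _ = Real.exp (2 * lam j * t) := by rw [← Real.exp_add]; ring_nf
          calc Real.exp (-(2 * lam j * s)) * x j ^ 2
              ≤ Real.exp (-(2 * lam j * s)) * Real.exp (2 * lam j * t) :=
                mul_le_mul_of_nonneg_left hxle (Real.exp_pos _).le
            _ = Real.exp (-(2 * lam j) * (s - t)) := by rw [← Real.exp_add]; ring_nf
            _ = Real.exp (-(2 * lam j) * (s - t)) * 1 := by ring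
      calc ENNReal.ofReal (min (∑ j ∈ Finset.Icc m n,
              Real.exp (-(2 * lam j * s)) * x j ^ 2) 1)
          ≤ ENNReal.ofReal (∑ j ∈ Finset.Icc m n,
              Real.exp (-(2 * lam j) * (s - t)) * min (x j ^ 2) 1) := by
            apply ENNReal.ofReal_le_ofReal
            exact le_trans (min_le_left _ _) (Finset.sum_le_sum hterm)
        _ = ∑ j ∈ Finset.Icc m n, ENNReal.ofReal
              (Real.exp (-(2 * lam j) * (s - t)) * min (x j ^ 2) 1) := by
            rw [ENNReal.ofReal_sum_of_nonneg]
            intro j _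
            have : (0:ℝ) ≤ min (x j ^ 2) 1 := le_min (sq_nonneg _) one_pos.le
            positivity
        _ = ∑ j ∈ Finset.Icc m n,
              ENNReal.ofReal (Real.exp (-(2 * lam j) * (s - t))) *
                ENNReal.ofReal (min (x j ^ 2) 1) := by
            refine Finset.sum_congr rfl fun j _ => ?_
            rw [ENNReal.ofReal_mul (Real.exp_pos _).le]
    calc (∫⁻ s in Set.Ioi t, ENNReal.ofReal (min (∑ j ∈ Finset.Icc m n,
            Real.exp (-(2 * lam j * s)) * x j ^ 2) 1))
        ≤ ∫⁻ s in Set.Ioi t, ∑ j ∈ Finset.Icc m n,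
            ENNReal.ofReal (Real.exp (-(2 * lam j) * (s - t))) *
              ENNReal.ofReal (min (x j ^ 2) 1) := by
          apply setLIntegral_mono' measurableSet_Ioi hpt
      _ = ∑ j ∈ Finset.Icc m n, ∫⁻ s in Set.Ioi t,
            ENNReal.ofReal (Real.exp (-(2 * lam j) * (s - t))) *
              ENNReal.ofReal (min (x j ^ 2) 1) := by
          refine lintegral_finset_sum _ fun j _ => ?_
          have hmeas : Measurable fun s : ℝ =>
              ENNReal.ofReal (Real.exp (-(2 * lam j) * (s - t))) :=
            ENNReal.measurable_ofReal.comp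
              (Real.measurable_exp.comp ((measurable_id.sub measurable_const).const_mul _))
          exact hmeas.mul_const _
      _ ≤ ∑ j ∈ Finset.Icc m n,
            ENNReal.ofReal (1 / (2 * lam j)) * ENNReal.ofReal (min (x j ^ 2) 1) := by
          refine Finset.sum_le_sum fun j _ => ?_
          have hb : (0:ℝ) < 2 * lam j := by linarith [hpos j]
          have hint : (∫⁻ s in Set.Ioi t,
              ENNReal.ofReal (Real.exp (-(2 * lam j) * (s - t)))) =
              ENNReal.ofReal (1 / (2 * lam j)) := by
            have heq : ∀ s : ℝ, Real.exp (-(2 * lam j) * (s - t)) =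
                Real.exp (2 * lam j * t) * Real.exp (-(2 * lam j) * s) := by
              intro s; rw [← Real.exp_add]; ring_nf
            calc (∫⁻ s in Set.Ioi t, ENNReal.ofReal (Real.exp (-(2 * lam j) * (s - t))))
                = ∫⁻ s in Set.Ioi t, ENNReal.ofReal (Real.exp (2 * lam j * t)) *
                    ENNReal.ofReal (Real.exp (-(2 * lam j) * s)) := by
                  refine lintegral_congr fun s => ?_
                  rw [heq s, ENNReal.ofReal_mul (Real.exp_pos _).le]
              _ = ENNReal.ofReal (Real.exp (2 * lam j * t)) *
                    ∫⁻ s in Set.Ioi t, ENNReal.ofReal (Real.exp (-(2 * lam j) * s)) := by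
                  rw [lintegral_const_mul]
                  exact ENNReal.measurable_ofReal.comp
                    ((Real.continuous_exp.comp (continuous_const.mul continuous_id)).measurable)
              _ = ENNReal.ofReal (Real.exp (2 * lam j * t)) *
                    ENNReal.ofReal (Real.exp (-(2 * lam j) * t) / (2 * lam j)) := by
                  rw [lint_exp hb]
              _ = ENNReal.ofReal (1 / (2 * lam j)) := by
                  rw [← ENNReal.ofReal_mul (Real.exp_pos _).le]
                  congr 1
                  rw [← mul_div_assoc, ← Real.exp_add]
                  have hz : 2 * lam j * t + -(2 * lam j) * t = 0 := by ring
                  rw [hz, Real.exp_zero]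
          have hmeas : Measurable fun s : ℝ =>
              ENNReal.ofReal (Real.exp (-(2 * lam j) * (s - t))) :=
            ENNReal.measurable_ofReal.comp
              (Real.measurable_exp.comp ((measurable_id.sub measurable_const).const_mul _))
          rw [lintegral_mul_const _ hmeas, hint]

/-- For the semigroup `T(s)e_k = e^{-λ_k s} e_k` with `∑ 1/λ_k < ∞` and a σ-finite Borel
measure `μ` with `sup_{‖v‖≤1} ∫ (⟨u,v⟩² ∧ 1) μ(du) < ∞`, the Lévy-measure conditions (c), (d)
hold if and only if the log-moment conditions (i), (ii) hold. -/
theorem stmt12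
    {V : Type*}
    [NormedAddCommGroup V] [InnerProductSpace ℝ V] [CompleteSpace V] [SecondCountableTopology V]
    [MeasurableSpace V] [BorelSpace V]
    (e : ℕ → V) (he : Orthonormal ℝ e)
    (hbasis : (Submodule.span ℝ (Set.range e)).topologicalClosure = ⊤)
    (lam : ℕ → ℝ) (hpos : ∀ k, 0 < lam k) (hmono : Monotone lam)
    (hinf : Tendsto lam atTop atTop)
    (hsum : Summable fun k => 1 / lam k)
    (μ : Measure V) [SigmaFinite μ]
    (hK : (⨆ v ∈ Metric.closedBall (0 : V) 1,
        ∫⁻ u, ENNReal.ofReal (min (⟪u, v⟫ ^ 2) 1) ∂μ) < ⊤) :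
    ((⨆ n : ℕ, ∫⁻ s in Set.Ioi (0 : ℝ), ∫⁻ u,
          ENNReal.ofReal (min (∑ k ∈ Finset.Icc 1 n,
            Real.exp (-(2 * lam k * s)) * ⟪u, e k⟫ ^ 2) 1) ∂μ) < ⊤
      ∧ Tendsto (fun m : ℕ => ⨆ n : ℕ, ∫⁻ s in Set.Ioi (0 : ℝ), ∫⁻ u,
          ENNReal.ofReal (min (∑ k ∈ Finset.Icc m n,
            Real.exp (-(2 * lam k * s)) * ⟪u, e k⟫ ^ 2) 1) ∂μ) atTop (𝓝 0))
    ↔ ((⨆ n : ℕ, ∫⁻ u, (((Finset.Icc 1 n).sup fun k =>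
          Real.toNNReal (Real.log (max |⟪u, e k⟫| 1) / lam k) : ℝ≥0) : ℝ≥0∞) ∂μ) < ⊤
      ∧ Tendsto (fun m : ℕ => ⨆ n : ℕ, ∫⁻ u, (((Finset.Icc m n).sup fun k =>
          Real.toNNReal (Real.log (max |⟪u, e k⟫| 1) / lam k) : ℝ≥0) : ℝ≥0∞) ∂μ)
        atTop (𝓝 0)) := by
  classical
  set K := (⨆ v ∈ Metric.closedBall (0 : V) 1,
      ∫⁻ u, ENNReal.ofReal (min (⟪u, v⟫ ^ 2) 1) ∂μ) with hKdef
  have hKk : ∀ k : ℕ, (∫⁻ u, ENNReal.ofReal (min (⟪u, e k⟫ ^ 2) 1) ∂μ) ≤ K := by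
    intro k
    have hmem : e k ∈ Metric.closedBall (0 : V) 1 := by
      rw [Metric.mem_closedBall, dist_zero_right, he.1 k]
    exact le_iSup₂ (f := fun v (_ : v ∈ Metric.closedBall (0:V) 1) =>
      ∫⁻ u, ENNReal.ofReal (min (⟪u, v⟫ ^ 2) 1) ∂μ) (e k) hmem
  -- Tonelli
  have hswap : ∀ m n : ℕ,
      (∫⁻ s in Set.Ioi (0:ℝ), ∫⁻ u, ENNReal.ofReal (min (∑ k ∈ Finset.Icc m n,
          Real.exp (-(2 * lam k * s)) * ⟪u, e k⟫ ^ 2) 1) ∂μ) =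
      ∫⁻ u, (∫⁻ s in Set.Ioi (0:ℝ), ENNReal.ofReal (min (∑ k ∈ Finset.Icc m n,
          Real.exp (-(2 * lam k * s)) * ⟪u, e k⟫ ^ 2) 1)) ∂μ := by
    intro m n
    apply lintegral_lintegral_swap
    apply Measurable.aemeasurable
    have hcont : Continuous fun p : ℝ × V => min (∑ k ∈ Finset.Icc m n,
        Real.exp (-(2 * lam k * p.1)) * ⟪p.2, e k⟫ ^ 2) 1 := by
      refine Continuous.min ?_ continuous_const
      refine continuous_finset_sum _ fun k _ => ?_
      exact (Real.continuous_exp.comp ((continuous_const.mul continuous_fst).neg)).mul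
        ((continuous_snd.inner continuous_const).pow 2)
    exact (ENNReal.continuous_ofReal.comp hcont).measurable
  -- lower bound
  have hGle : ∀ (m n : ℕ) (u : V),
      (((Finset.Icc m n).sup fun k =>
          Real.toNNReal (Real.log (max |⟪u, e k⟫| 1) / lam k) : ℝ≥0) : ℝ≥0∞) ≤
      ∫⁻ s in Set.Ioi (0:ℝ), ENNReal.ofReal (min (∑ k ∈ Finset.Icc m n,
          Real.exp (-(2 * lam k * s)) * ⟪u, e k⟫ ^ 2) 1) := by
    intro m n u
    rw [coe_finset_sup]
    refine Finset.sup_le fun k hk => ?_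
    exact lemA lam hpos (fun k => ⟪u, e k⟫) hk
  -- measurability of G
  have hmk : ∀ k : ℕ, Measurable fun u : V =>
      ((Real.toNNReal (Real.log (max |⟪u, e k⟫| 1) / lam k) : ℝ≥0) : ℝ≥0∞) := by
    intro k
    have h0 : Measurable fun u : V => ⟪u, e k⟫ :=
      (Continuous.inner continuous_id continuous_const).measurable
    exact ENNReal.measurable_ofReal.comp
      ((Real.measurable_log.comp (h0.abs.max measurable_const)).div_const _)
  have hmeasG : ∀ m n : ℕ, Measurable fun u : V =>
      (((Finset.Icc m n).sup fun k =>
        Real.toNNReal (Real.log (max |⟪u, e k⟫| 1) / lam k) : ℝ≥0) : ℝ≥0∞) := by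
    intro m n
    have : (fun u : V => (((Finset.Icc m n).sup fun k =>
        Real.toNNReal (Real.log (max |⟪u, e k⟫| 1) / lam k) : ℝ≥0) : ℝ≥0∞)) =
        fun u : V => (Finset.Icc m n).sup fun k =>
          ((Real.toNNReal (Real.log (max |⟪u, e k⟫| 1) / lam k) : ℝ≥0) : ℝ≥0∞) := by
      funext u; rw [coe_finset_sup]
    rw [this]
    exact measurable_finset_sup _ _ hmk
  -- tail sums
  have hsum2 : Summable (fun k : ℕ => 1 / (2 * lam k)) :=
    (hsum.div_const 2).congr (fun k => by ring)
  have hεfin : ∀ m : ℕ, (∑' j : ℕ, ENNReal.ofReal (1 / (2 * lam (j + m)))) ≠ ⊤ := by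
    intro m
    rw [← ENNReal.ofReal_tsum_of_nonneg
      (fun j => div_nonneg zero_le_one (by linarith [hpos (j + m)]))
      ((summable_nat_add_iff m).mpr hsum2)]
    exact ENNReal.ofReal_ne_top
  have hεt : Tendsto (fun m : ℕ => ∑' j : ℕ, ENNReal.ofReal (1 / (2 * lam (j + m))))
      atTop (𝓝 0) := by
    have htot : (∑' j : ℕ, ENNReal.ofReal (1 / (2 * lam j))) ≠ ⊤ := by
      rw [← ENNReal.ofReal_tsum_of_nonneg
        (fun j => div_nonneg zero_le_one (by linarith [hpos j])) hsum2]
      exact ENNReal.ofReal_ne_top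
    exact ENNReal.tendsto_sum_nat_add _ htot
  -- upper bound
  have hupper : ∀ m n : ℕ,
      (∫⁻ u, (∫⁻ s in Set.Ioi (0:ℝ), ENNReal.ofReal (min (∑ k ∈ Finset.Icc m n,
          Real.exp (-(2 * lam k * s)) * ⟪u, e k⟫ ^ 2) 1)) ∂μ) ≤
      (∫⁻ u, (((Finset.Icc m n).sup fun k =>
          Real.toNNReal (Real.log (max |⟪u, e k⟫| 1) / lam k) : ℝ≥0) : ℝ≥0∞) ∂μ)
        + (∑' j : ℕ, ENNReal.ofReal (1 / (2 * lam (j + m)))) * K := by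
    intro m n
    have hmj : ∀ j : ℕ, Measurable fun u : V =>
        ENNReal.ofReal (1 / (2 * lam j)) * ENNReal.ofReal (min (⟪u, e j⟫ ^ 2) 1) := by
      intro j
      have h0 : Measurable fun u : V => ⟪u, e j⟫ :=
        (Continuous.inner continuous_id continuous_const).measurable
      exact (ENNReal.measurable_ofReal.comp
        (((h0.pow_const 2).min measurable_const))).const_mul _
    calc (∫⁻ u, (∫⁻ s in Set.Ioi (0:ℝ), ENNReal.ofReal (min (∑ k ∈ Finset.Icc m n,
            Real.exp (-(2 * lam k * s)) * ⟪u, e k⟫ ^ 2) 1)) ∂μ)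
        ≤ ∫⁻ u, ((((Finset.Icc m n).sup fun k =>
            Real.toNNReal (Real.log (max |⟪u, e k⟫| 1) / lam k) : ℝ≥0) : ℝ≥0∞)
            + ∑ j ∈ Finset.Icc m n,
                ENNReal.ofReal (1 / (2 * lam j)) * ENNReal.ofReal (min (⟪u, e j⟫ ^ 2) 1)) ∂μ := by
          refine lintegral_mono fun u => ?_
          exact lemB lam hpos (fun k => ⟪u, e k⟫) m n
      _ = (∫⁻ u, (((Finset.Icc m n).sup fun k =>
            Real.toNNReal (Real.log (max |⟪u, e k⟫| 1) / lam k) : ℝ≥0) : ℝ≥0∞) ∂μ)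
          + ∫⁻ u, ∑ j ∈ Finset.Icc m n,
              ENNReal.ofReal (1 / (2 * lam j)) * ENNReal.ofReal (min (⟪u, e j⟫ ^ 2) 1) ∂μ :=
          lintegral_add_left (hmeasG m n) _
      _ ≤ (∫⁻ u, (((Finset.Icc m n).sup fun k =>
            Real.toNNReal (Real.log (max |⟪u, e k⟫| 1) / lam k) : ℝ≥0) : ℝ≥0∞) ∂μ)
          + (∑' j : ℕ, ENNReal.ofReal (1 / (2 * lam (j + m)))) * K := by
          refine add_le_add le_rfl ?_
          rw [lintegral_finset_sum _ fun j _ => hmj j]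
          calc ∑ j ∈ Finset.Icc m n, ∫⁻ u,
                ENNReal.ofReal (1 / (2 * lam j)) * ENNReal.ofReal (min (⟪u, e j⟫ ^ 2) 1) ∂μ
              = ∑ j ∈ Finset.Icc m n, ENNReal.ofReal (1 / (2 * lam j)) *
                  ∫⁻ u, ENNReal.ofReal (min (⟪u, e j⟫ ^ 2) 1) ∂μ := by
                refine Finset.sum_congr rfl fun j _ => ?_
                rw [lintegral_const_mul]
                have h0 : Measurable fun u : V => ⟪u, e j⟫ :=
                  (Continuous.inner continuous_id continuous_const).measurable
                exact ENNReal.measurable_ofReal.comp ((h0.pow_const 2).min measurable_const)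
            _ ≤ ∑ j ∈ Finset.Icc m n, ENNReal.ofReal (1 / (2 * lam j)) * K :=
                Finset.sum_le_sum fun j _ => mul_le_mul_right (hKk j) _
            _ = (∑ j ∈ Finset.Icc m n, ENNReal.ofReal (1 / (2 * lam j))) * K := by
                rw [Finset.sum_mul]
            _ ≤ (∑' j : ℕ, ENNReal.ofReal (1 / (2 * lam (j + m)))) * K :=
                mul_le_mul_left
                  (sum_Icc_le_tail (fun j => ENNReal.ofReal (1 / (2 * lam j))) m n) _
  constructor
  · rintro ⟨hc, hd⟩
    constructor
    · refine lt_of_le_of_lt (iSup_mono fun n => ?_) hc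
      rw [hswap 1 n]
      exact lintegral_mono fun u => hGle 1 n u
    · refine tendsto_of_tendsto_of_tendsto_of_le_of_le tendsto_const_nhds hd
        (fun m => zero_le) (fun m => ?_)
      refine iSup_mono fun n => ?_
      rw [hswap m n]
      exact lintegral_mono fun u => hGle m n u
  · rintro ⟨hi, hii⟩
    have hmain : ∀ m : ℕ,
        (⨆ n : ℕ, ∫⁻ s in Set.Ioi (0:ℝ), ∫⁻ u, ENNReal.ofReal (min (∑ k ∈ Finset.Icc m n,
            Real.exp (-(2 * lam k * s)) * ⟪u, e k⟫ ^ 2) 1) ∂μ) ≤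
        (⨆ n : ℕ, ∫⁻ u, (((Finset.Icc m n).sup fun k =>
            Real.toNNReal (Real.log (max |⟪u, e k⟫| 1) / lam k) : ℝ≥0) : ℝ≥0∞) ∂μ)
          + (∑' j : ℕ, ENNReal.ofReal (1 / (2 * lam (j + m)))) * K := by
      intro m
      refine iSup_le fun n => ?_
      rw [hswap m n]
      refine le_trans (hupper m n) (add_le_add ?_ le_rfl)
      exact le_iSup (fun n => ∫⁻ u, (((Finset.Icc m n).sup fun k =>
        Real.toNNReal (Real.log (max |⟪u, e k⟫| 1) / lam k) : ℝ≥0) : ℝ≥0∞) ∂μ) n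
    constructor
    · refine lt_of_le_of_lt (hmain 1) ?_
      exact ENNReal.add_lt_top.mpr ⟨hi,
        ENNReal.mul_lt_top (lt_top_iff_ne_top.mpr (hεfin 1)) hK⟩
    · have h2 : Tendsto (fun m : ℕ => (⨆ n : ℕ, ∫⁻ u, (((Finset.Icc m n).sup fun k =>
          Real.toNNReal (Real.log (max |⟪u, e k⟫| 1) / lam k) : ℝ≥0) : ℝ≥0∞) ∂μ)
          + (∑' j : ℕ, ENNReal.ofReal (1 / (2 * lam (j + m)))) * K) atTop (𝓝 0) := by
        have hm := ENNReal.Tendsto.mul_const hεt (Or.inr hK.ne)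
        rw [zero_mul] at hm
        simpa using hii.add hm
      exact tendsto_of_tendsto_of_tendsto_of_le_of_le tendsto_const_nhds h2
        (fun m => zero_le) hmain
end

section
/- Let λ > 0, σ ∈ ℝ, and let ρ be a σ-finite Borel measure on ℝ. Then ∫₀^∞ ∫_ℝ ( e^{−2λs} σ² β² ∧ 1 ) ρ(dβ) ds = (1/(2λ)) ∫_ℝ ( σ² β² ∧ 1 ) ρ(dβ) + (1/λ) ∫_ℝ log⁺|σβ| ρ(dβ), where both sides are allowed to take the value +∞. -/
open MeasureTheory Filter Topology
open scoped ENNReal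

section Aux
open Set Real

lemma exp_lint (b t : ℝ) (hb : 0 < b) :
    ∫⁻ s in Set.Ioi t, ENNReal.ofReal (Real.exp (-(b * s)))
      = ENNReal.ofReal (Real.exp (-(b * t)) / b) := by
  rw [← ofReal_integral_eq_lintegral_ofReal]
  · congr 1
    have h := integral_comp_mul_left_Ioi (fun x => Real.exp (-x)) t hb
    simp only [smul_eq_mul] at h
    rw [show (fun s => Real.exp (-(b * s))) = fun s => Real.exp (-(b * s)) from rfl]
    calc ∫ s in Ioi t, Real.exp (-(b * s)) = b⁻¹ * ∫ x in Ioi (b * t), Real.exp (-x) := h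
    _ = Real.exp (-(b * t)) / b := by rw [integral_exp_neg_Ioi]; ring
  · simpa [neg_mul, IntegrableOn] using exp_neg_integrableOn_Ioi t hb
  · filter_upwards with x using (Real.exp_pos _).le

lemma key (l : ℝ) (hl : 0 < l) (c : ℝ) :
    ∫⁻ s in Set.Ioi (0 : ℝ), ENNReal.ofReal (min (Real.exp (-(2 * l * s)) * c ^ 2) 1)
      = ENNReal.ofReal (1 / (2 * l) * min (c ^ 2) 1 + 1 / l * Real.log (max |c| 1)) := by
  have h2l : (0:ℝ) < 2 * l := by linarith
  have hmeas : Measurable fun s : ℝ => ENNReal.ofReal (Real.exp (-(2 * l * s))) :=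
    Measurable.ennreal_ofReal
      (Real.continuous_exp.comp (continuous_const.mul continuous_id).neg).measurable
  by_cases hc : |c| ≤ 1
  · have hc2 : c ^ 2 ≤ 1 := by
      rw [← sq_abs]; exact pow_le_one₀ (abs_nonneg c) hc
    have hmin : ∀ s ∈ Ioi (0:ℝ),
        ENNReal.ofReal (min (Real.exp (-(2 * l * s)) * c ^ 2) 1)
          = ENNReal.ofReal (Real.exp (-(2 * l * s))) * ENNReal.ofReal (c ^ 2) := by
      intro s hs
      have h1 : Real.exp (-(2 * l * s)) ≤ 1 := by
        rw [Real.exp_le_one_iff]; nlinarith [hs.out]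
      rw [min_eq_left, ENNReal.ofReal_mul (Real.exp_pos _).le]
      nlinarith [sq_nonneg c, (Real.exp_pos (-(2*l*s))).le]
    rw [setLIntegral_congr_fun measurableSet_Ioi hmin,
      lintegral_mul_const _ hmeas, exp_lint _ _ h2l,
      min_eq_left hc2, max_eq_right hc, Real.log_one]
    rw [← ENNReal.ofReal_mul (by positivity)]
    congr 1
    rw [mul_zero, neg_zero, Real.exp_zero]
    ring
  · push_neg at hc
    have hca : (0:ℝ) < |c| := by linarith
    have hc2 : 1 ≤ c ^ 2 := by
      rw [← sq_abs]; exact one_le_pow₀ hc.le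
    set s₀ : ℝ := Real.log |c| / l with hs₀
    have hlog : 0 < Real.log |c| := Real.log_pos hc
    have hs₀pos : 0 < s₀ := div_pos hlog hl
    have hsplit : Ioc (0:ℝ) s₀ ∪ Ioi s₀ = Ioi 0 := Ioc_union_Ioi_eq_Ioi hs₀pos.le
    rw [← hsplit, lintegral_union measurableSet_Ioi (Set.Ioc_disjoint_Ioi le_rfl)]
    have hexp2 : Real.exp (-(2 * l * s₀)) = (c ^ 2)⁻¹ := by
      have : 2 * l * s₀ = Real.log (c ^ 2) := by
        rw [← sq_abs, Real.log_pow, hs₀]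
        push_cast; field_simp
      rw [this, Real.exp_neg, Real.exp_log (by positivity)]
    have hA : ∫⁻ s in Ioc (0:ℝ) s₀,
        ENNReal.ofReal (min (Real.exp (-(2 * l * s)) * c ^ 2) 1) = ENNReal.ofReal s₀ := by
      have hmin : ∀ s ∈ Ioc (0:ℝ) s₀,
          ENNReal.ofReal (min (Real.exp (-(2 * l * s)) * c ^ 2) 1) = 1 := by
        intro s hs
        have h1 : Real.exp (-(2 * l * s₀)) ≤ Real.exp (-(2 * l * s)) := by
          apply Real.exp_le_exp.2; nlinarith [hs.2]
        rw [hexp2] at h1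
        have h2 : 1 ≤ Real.exp (-(2 * l * s)) * c ^ 2 := by
          have := mul_le_mul_of_nonneg_right h1 (by positivity : (0:ℝ) ≤ c ^ 2)
          rwa [inv_mul_cancel₀ (by positivity : (c:ℝ) ^ 2 ≠ 0)] at this
        rw [min_eq_right h2, ENNReal.ofReal_one]
      rw [setLIntegral_congr_fun measurableSet_Ioc hmin]
      simp [Real.volume_Ioc, hs₀pos.le]
    have hB : ∫⁻ s in Ioi s₀,
        ENNReal.ofReal (min (Real.exp (-(2 * l * s)) * c ^ 2) 1)
          = ENNReal.ofReal (1 / (2 * l)) := by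
      have hmin : ∀ s ∈ Ioi s₀,
          ENNReal.ofReal (min (Real.exp (-(2 * l * s)) * c ^ 2) 1)
            = ENNReal.ofReal (Real.exp (-(2 * l * s))) * ENNReal.ofReal (c ^ 2) := by
        intro s hs
        have h1 : Real.exp (-(2 * l * s)) ≤ Real.exp (-(2 * l * s₀)) := by
          apply Real.exp_le_exp.2; nlinarith [hs.out]
        rw [hexp2] at h1
        rw [min_eq_left, ENNReal.ofReal_mul (Real.exp_pos _).le]
        calc Real.exp (-(2 * l * s)) * c ^ 2 ≤ (c ^ 2)⁻¹ * c ^ 2 := by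
              apply mul_le_mul_of_nonneg_right h1 (by positivity)
        _ = 1 := inv_mul_cancel₀ (by positivity)
      rw [setLIntegral_congr_fun measurableSet_Ioi hmin,
        lintegral_mul_const _ hmeas, exp_lint _ _ h2l, hexp2,
        ← ENNReal.ofReal_mul (by positivity)]
      congr 1
      field_simp
      exact div_self (abs_pos.mp hca)
    rw [hA, hB, min_eq_right hc2, max_eq_left hc.le,
      ← ENNReal.ofReal_add hs₀pos.le (by positivity)]
    congr 1
    rw [hs₀]
    field_simp
    ring
end Aux

/-- For `λ > 0`, `σ ∈ ℝ` and a σ-finite Borel measure `ρ` on `ℝ`: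
`∫₀^∞ ∫ (e^{-2λs}σ²β² ∧ 1) ρ(dβ) ds
  = (1/(2λ)) ∫ (σ²β² ∧ 1) ρ(dβ) + (1/λ) ∫ log⁺|σβ| ρ(dβ)`,
where both sides may be `+∞`. -/
theorem stmt15
    (l : ℝ) (hl : 0 < l) (σ : ℝ) (ρ : Measure ℝ) [SigmaFinite ρ] :
    (∫⁻ s in Set.Ioi (0 : ℝ), ∫⁻ β,
        ENNReal.ofReal (min (Real.exp (-(2 * l * s)) * σ ^ 2 * β ^ 2) 1) ∂ρ)
      = ENNReal.ofReal (1 / (2 * l)) * (∫⁻ β, ENNReal.ofReal (min (σ ^ 2 * β ^ 2) 1) ∂ρ)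
        + ENNReal.ofReal (1 / l) * (∫⁻ β, ENNReal.ofReal (Real.log (max |σ * β| 1)) ∂ρ) := by
  have hmeas : AEMeasurable (Function.uncurry fun s β : ℝ =>
      ENNReal.ofReal (min (Real.exp (-(2 * l * s)) * σ ^ 2 * β ^ 2) 1))
      ((volume.restrict (Set.Ioi (0:ℝ))).prod ρ) := by
    apply Continuous.aemeasurable
    apply ENNReal.continuous_ofReal.comp
    exact (((Real.continuous_exp.comp
      (continuous_const.mul continuous_fst).neg).mul continuous_const).mul
      (continuous_snd.pow 2)).min continuous_const
  rw [lintegral_lintegral_swap hmeas]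
  have h1 : ∀ β : ℝ, (∫⁻ s in Set.Ioi (0:ℝ),
      ENNReal.ofReal (min (Real.exp (-(2 * l * s)) * σ ^ 2 * β ^ 2) 1))
      = ENNReal.ofReal (1 / (2 * l) * min (σ ^ 2 * β ^ 2) 1
          + 1 / l * Real.log (max |σ * β| 1)) := by
    intro β
    have h := key l hl (σ * β)
    simp only [mul_pow] at h
    rw [← h]
    apply lintegral_congr
    intro s
    congr 2
    ring
  rw [lintegral_congr h1]
  have m1 : Measurable fun β : ℝ => ENNReal.ofReal (min (σ ^ 2 * β ^ 2) 1) := by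
    apply Measurable.ennreal_ofReal
    exact ((continuous_const.mul (continuous_id.pow 2)).min continuous_const).measurable
  have m2 : Measurable fun β : ℝ => ENNReal.ofReal (Real.log (max |σ * β| 1)) := by
    apply Measurable.ennreal_ofReal
    exact Real.measurable_log.comp
      (((continuous_const.mul continuous_id).abs.max continuous_const).measurable)
  calc ∫⁻ β, ENNReal.ofReal (1 / (2 * l) * min (σ ^ 2 * β ^ 2) 1
          + 1 / l * Real.log (max |σ * β| 1)) ∂ρ
      = ∫⁻ β, (ENNReal.ofReal (1 / (2 * l)) * ENNReal.ofReal (min (σ ^ 2 * β ^ 2) 1)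
          + ENNReal.ofReal (1 / l) * ENNReal.ofReal (Real.log (max |σ * β| 1))) ∂ρ := by
        apply lintegral_congr
        intro β
        rw [ENNReal.ofReal_add
            (mul_nonneg (by positivity) (le_min (by positivity) zero_le_one))
            (mul_nonneg (by positivity) (Real.log_nonneg (le_max_right _ _))),
          ENNReal.ofReal_mul (by positivity), ENNReal.ofReal_mul (by positivity)]
    _ = _ := by
        rw [lintegral_add_left (m1.const_mul _), lintegral_const_mul _ m1,
          lintegral_const_mul _ m2]
end
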